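/- The KL projection onto the truncated simplex has the explicit form wᵢ* = max{μ, c·w̃ᵢ}: if w* minimizes Σᵢ wᵢ log(wᵢ/w̃ᵢ) over {w : wᵢ ≥ μ, Σᵢ wᵢ = 1}, then there exists a constant c > 0 such that wᵢ* = max{μ, c·w̃ᵢ} for every i, and c satisfies Σᵢ max{μ, c·w̃ᵢ} = 1. -/

import Mathlib

open Finset

section Aux
open Filter Set Topology

lemma kl_slope_aux {a b p q δ : ℝ} (ha : 0 < a) (hb : 0 < b) (hp : 0 < p) (hq : 0 < q)
    (hδ : 0 < δ) (hδa : δ < a)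
    (h : ∀ t, 0 < t → t ≤ δ →
      a * Real.log (a / p) + b * Real.log (b / q) ≤
        (a - t) * Real.log ((a - t) / p) + (b + t) * Real.log ((b + t) / q)) :
    Real.log (a / p) ≤ Real.log (b / q) := by
  set g : ℝ → ℝ := fun t => (a - t) * (Real.log (a - t) - Real.log p)
      + (b + t) * (Real.log (b + t) - Real.log q) with hgdef
  set D : ℝ := Real.log (b / q) - Real.log (a / p) with hD
  have h1 : HasDerivAt (fun t : ℝ => a - t) (-1) 0 := by
    simpa using (hasDerivAt_id (0:ℝ)).const_sub a
  have h2 : HasDerivAt (fun t : ℝ => b + t) 1 0 := by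
    simpa using (hasDerivAt_id (0:ℝ)).const_add b
  have hl1 : HasDerivAt (fun t : ℝ => Real.log (a - t)) (-1 / a) 0 := by
    simpa using h1.log (by simpa using ha.ne')
  have hl2 : HasDerivAt (fun t : ℝ => Real.log (b + t)) (1 / b) 0 := by
    simpa using h2.log (by simpa using hb.ne')
  have hd : HasDerivAt g D 0 := by
    have hA : HasDerivAt (fun t : ℝ => (a - t) * (Real.log (a - t) - Real.log p))
        ((-1) * (Real.log (a - 0) - Real.log p) + (a - 0) * (-1 / a)) 0 :=
      h1.mul (hl1.sub_const _)
    have hB : HasDerivAt (fun t : ℝ => (b + t) * (Real.log (b + t) - Real.log q))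
        (1 * (Real.log (b + 0) - Real.log q) + (b + 0) * (1 / b)) 0 :=
      h2.mul (hl2.sub_const _)
    have := hA.add hB
    refine this.congr_deriv ?_
    rw [hD, Real.log_div ha.ne' hp.ne', Real.log_div hb.ne' hq.ne']
    field_simp
    ring
  have htend : Tendsto (slope g 0) (𝓝[>] (0:ℝ)) (𝓝 D) :=
    (hasDerivAt_iff_tendsto_slope.mp hd).mono_left
      (nhdsWithin_mono 0 (fun x hx => ne_of_gt hx))
  have hDnn : 0 ≤ D := by
    refine ge_of_tendsto htend ?_
    filter_upwards [Ioo_mem_nhdsGT_of_mem ⟨le_refl (0:ℝ), hδ⟩] with t ht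
    have ht0 : 0 < t := ht.1
    have htδ : t ≤ δ := le_of_lt ht.2
    have hat : 0 < a - t := by linarith
    have hgt : g 0 ≤ g t := by
      have := h t ht0 htδ
      rw [hgdef]
      simp only
      rw [← Real.log_div hat.ne' hp.ne', ← Real.log_div (by linarith : (0:ℝ) < b + t).ne' hq.ne']
      rw [← Real.log_div (by simpa using ha.ne') hp.ne', ← Real.log_div (by simpa using hb.ne') hq.ne']
      simpa using this
    rw [slope_def_field]
    apply div_nonneg (by linarith) (by linarith)
  rw [hD] at hDnn; linarith
end Aux

/-- The KL projection onto the truncated simplex has the explicit form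
`wᵢ* = max {μ, c · w̃ᵢ}`. -/
theorem kl_projection_explicit_form (n : ℕ) (hn : 1 ≤ n) (μ : ℝ) (hμ : 0 < μ)
    (hμn : μ < 1 / n) (wt : Fin n → ℝ) (hwt : ∀ i, 0 < wt i) (wstar : Fin n → ℝ)
    (hmem : (∀ i, μ ≤ wstar i) ∧ ∑ i, wstar i = 1)
    (hmin : ∀ v : Fin n → ℝ, (∀ i, μ ≤ v i) → ∑ i, v i = 1 →
      ∑ i, wstar i * Real.log (wstar i / wt i) ≤ ∑ i, v i * Real.log (v i / wt i)) :
    ∃ c : ℝ, 0 < c ∧ (∀ i, wstar i = max μ (c * wt i)) ∧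
      ∑ i, max μ (c * wt i) = 1 := by
  obtain ⟨hge, hsum⟩ := hmem
  have hpos : ∀ i, 0 < wstar i := fun i => lt_of_lt_of_le hμ (hge i)
  -- key pairwise inequality
  have key : ∀ i j : Fin n, i ≠ j → μ < wstar i →
      wstar i / wt i ≤ wstar j / wt j := by
    intro i j hij hi
    have hlog : Real.log (wstar i / wt i) ≤ Real.log (wstar j / wt j) := by
      apply kl_slope_aux (hpos i) (hpos j) (hwt i) (hwt j)
        (show (0:ℝ) < wstar i - μ by linarith)
        (show wstar i - μ < wstar i by linarith)
      intro t ht0 htδ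
      set v : Fin n → ℝ := fun k =>
        wstar k + (if k = j then t else 0) - (if k = i then t else 0) with hv
      have hvi : v i = wstar i - t := by simp [hv, hij]
      have hvj : v j = wstar j + t := by simp [hv, hij.symm]
      have hvk : ∀ k, k ≠ i → k ≠ j → v k = wstar k := by
        intro k hki hkj; simp [hv, hki, hkj]
      have hvge : ∀ k, μ ≤ v k := by
        intro k
        by_cases hki : k = i
        · rw [hki, hvi]; linarith
        · by_cases hkj : k = j
          · rw [hkj, hvj]; linarith [hge j]
          · rw [hvk k hki hkj]; exact hge k
      have hvsum : ∑ k, v k = 1 := by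
        simp only [hv, Finset.sum_sub_distrib, Finset.sum_add_distrib,
          Finset.sum_ite_eq', Finset.mem_univ, if_true, hsum]
        ring
      have hm := hmin v hvge hvsum
      -- reduce the sum inequality to the pair i, j
      set f : Fin n → ℝ := fun k =>
        v k * Real.log (v k / wt k) - wstar k * Real.log (wstar k / wt k) with hf
      have hsupp : ∀ x ∈ Finset.univ, x ∉ ({i, j} : Finset (Fin n)) → f x = 0 := by
        intro x _ hx
        simp only [Finset.mem_insert, Finset.mem_singleton, not_or] at hx
        simp [hf, hvk x hx.1 hx.2]
      have hpair : ∑ k, f k = f i + f j := by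
        rw [← Finset.sum_subset (Finset.subset_univ ({i, j} : Finset (Fin n))) hsupp]
        exact Finset.sum_pair hij
      have hfsum : 0 ≤ ∑ k, f k := by
        rw [hf]
        simp only [Finset.sum_sub_distrib]
        linarith [hm]
      rw [hpair] at hfsum
      simp only [hf, hvi, hvj] at hfsum
      linarith [hfsum]
    have h1 : 0 < wstar i / wt i := div_pos (hpos i) (hwt i)
    have h2 : 0 < wstar j / wt j := div_pos (hpos j) (hwt j)
    exact (Real.log_le_log_iff h1 h2).mp hlog
  -- there is an index above μ
  obtain ⟨i0, hi0⟩ : ∃ i : Fin n, μ < wstar i := by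
    by_contra hc
    push_neg at hc
    have heq : ∀ i, wstar i = μ := fun i => le_antisymm (hc i) (hge i)
    have : (n : ℝ) * μ = 1 := by
      rw [← hsum]; simp [heq, Finset.sum_const, Finset.card_univ, mul_comm]
    have hn' : (1:ℝ) ≤ (n:ℝ) := by exact_mod_cast hn
    have hnpos : (0:ℝ) < n := by linarith
    have : μ = 1 / n := by field_simp at this ⊢; linarith
    rw [this] at hμn; linarith
  set c := wstar i0 / wt i0 with hc
  have hform : ∀ i, wstar i = max μ (c * wt i) := by
    intro i
    by_cases hi : μ < wstar i
    · have hle : wstar i = c * wt i := by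
        by_cases hii : i = i0
        · rw [hii, hc, div_mul_cancel₀ _ (hwt i0).ne']
        · have h1 := key i i0 hii hi
          have h2 := key i0 i (Ne.symm hii) hi0
          have : wstar i / wt i = c := le_antisymm h1 h2
          rw [← this, div_mul_cancel₀ _ (hwt i).ne']
      rw [hle, max_eq_right]
      rw [← hle]; exact hge i
    · push_neg at hi
      have hieq : wstar i = μ := le_antisymm hi (hge i)
      have hii : i0 ≠ i := by
        intro h; rw [h, hieq] at hi0; linarith
      have h1 := key i0 i hii hi0
      have : c * wt i ≤ μ := by
        rw [← hieq]
        calc c * wt i ≤ (wstar i / wt i) * wt i := by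
              apply mul_le_mul_of_nonneg_right h1 (hwt i).le
          _ = wstar i := by rw [div_mul_cancel₀ _ (hwt i).ne']
      rw [hieq, max_eq_left this]
  refine ⟨c, div_pos (hpos i0) (hwt i0), hform, ?_⟩
  rw [← hsum]
  exact (Finset.sum_congr rfl fun i _ => (hform i).symm)
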